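/- A graph G admits a locally complete 2-edge-colouring if and only if its reduced subgraph (obtained by repeatedly deleting one vertex of each pair of true twins until none remain) admits a locally complete 2-edge-colouring. -/
import Mathlib


open SimpleGraph

/-- A 2-edge-colouring `c` of `G` is locally complete if there is no monochromatic
induced path of length 2. -/
def IsLocallyComplete {V : Type*} (G : SimpleGraph V) (c : Sym2 V → Bool) : Prop :=
  ∀ u v w : V, G.Adj u v → G.Adj u w → v ≠ w → ¬ G.Adj v w → c s(u, v) ≠ c s(u, w)

/-- `G` has a locally complete 2-edge-colouring. -/
def HasLC2EC {V : Type*} (G : SimpleGraph V) : Prop :=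
  ∃ c : Sym2 V → Bool, IsLocallyComplete G c

/-- `u` and `v` are true twins in `G`: they have the same closed neighbourhood. -/
def TrueTwins {V : Type*} (G : SimpleGraph V) (u v : V) : Prop :=
  ∀ w : V, (w = u ∨ G.Adj u w) ↔ (w = v ∨ G.Adj v w)

lemma TrueTwins.symm' {V : Type*} {G : SimpleGraph V} {a b : V}
    (h : TrueTwins G a b) : TrueTwins G b a := fun w => (h w).symm

lemma TrueTwins.trans' {V : Type*} {G : SimpleGraph V} {a b c : V}
    (h1 : TrueTwins G a b) (h2 : TrueTwins G b c) : TrueTwins G a c :=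
  fun w => (h1 w).trans (h2 w)

lemma TrueTwins.adj {V : Type*} {G : SimpleGraph V} {a b : V}
    (h : TrueTwins G a b) (hne : a ≠ b) : G.Adj a b := by
  rcases (h b).mpr (Or.inl rfl) with h' | h'
  · exact absurd h'.symm hne
  · exact h'

lemma TrueTwins.adj_trans {V : Type*} {G : SimpleGraph V} {a b x : V}
    (h : TrueTwins G a b) (hx : G.Adj a x) (hxb : x ≠ b) : G.Adj b x := by
  rcases (h x).mp (Or.inr hx) with h' | h'
  · exact absurd h' hxb
  · exact h'

/-- `G` has a locally complete 2-edge-colouring iff its reduced subgraph (the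
induced subgraph on a set `S` containing exactly one vertex from each true-twin
class) has one. -/
theorem stmt_19 {V : Type*} (G : SimpleGraph V) (S : Set V)
    (hS : ∀ v : V, ∃! u : V, u ∈ S ∧ TrueTwins G v u) :
    HasLC2EC G ↔ HasLC2EC (G.induce S) := by
  constructor
  · rintro ⟨c, hc⟩
    refine ⟨fun e => c (Sym2.map Subtype.val e), ?_⟩
    rintro ⟨u, hu⟩ ⟨v, hv⟩ ⟨w, hw⟩ huv huw hvw hnadj
    simpa using hc u v w huv huw (fun h => hvw (Subtype.ext h)) hnadj
  · rintro ⟨c, hc⟩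
    set r : V → V := fun v => (hS v).choose with hr
    have rS : ∀ v, r v ∈ S := fun v => (hS v).choose_spec.1.1
    have rT : ∀ v, TrueTwins G v (r v) := fun v => (hS v).choose_spec.1.2
    refine ⟨fun e => c (Sym2.map (fun v => (⟨r v, rS v⟩ : S)) e), ?_⟩
    intro u v w huv huw hvw hnadj
    -- no two of u, v, w are twins
    have tuv : ¬ TrueTwins G u v := fun tw =>
      hnadj (tw.adj_trans huw hvw.symm)
    have tuw : ¬ TrueTwins G u w := fun tw =>
      hnadj (tw.adj_trans huv hvw).symm
    have tvw : ¬ TrueTwins G v w := fun tw => hnadj (tw.adj hvw)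
    -- twin-transitivity via representatives
    have req : ∀ a b : V, r a = r b → TrueTwins G a b := by
      intro a b h
      have := (rT b).symm'
      rw [← h] at this
      exact (rT a).trans' this
    have hru_rv : r u ≠ r v := fun h => tuv (req u v h)
    have hru_rw : r u ≠ r w := fun h => tuw (req u w h)
    have hrv_rw : r v ≠ r w := fun h => tvw (req v w h)
    have hv_ru : v ≠ r u := fun h => tuv (by rw [h]; exact rT u)
    have hw_ru : w ≠ r u := fun h => tuw (by rw [h]; exact rT u)
    have hw_rv : w ≠ r v := fun h => tvw (by rw [h]; exact rT v)
    have hv_rw : v ≠ r w := fun h => tvw (by rw [h]; exact (rT w).symm')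
    -- adjacencies among representatives
    have a1 : G.Adj (r u) (r v) :=
      (((rT v).adj_trans ((rT u).adj_trans huv hv_ru).symm hru_rv).symm)
    have a2 : G.Adj (r u) (r w) :=
      (((rT w).adj_trans ((rT u).adj_trans huw hw_ru).symm hru_rw).symm)
    have a3 : ¬ G.Adj (r v) (r w) := by
      intro h
      have h1 : G.Adj w (r v) := (rT w).symm'.adj_trans h.symm hw_rv.symm
      exact hnadj ((rT v).symm'.adj_trans h1.symm hvw.symm)
    have key := hc ⟨r u, rS u⟩ ⟨r v, rS v⟩ ⟨r w, rS w⟩ a1 a2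
      (fun h => hrv_rw (congrArg Subtype.val h)) a3
    simpa using key
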